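/- Let F: ℂ^{N+1} → ℂ^{N+1} be a homogeneous polynomial map of degree d ≥ 2 with nonzero resultant (i.e., F⁻¹(0) = {0}) and suppose there is a constant B such that |log‖F(y)‖ − d·log‖y‖| ≤ B for all y ≠ 0, where ‖·‖ is the sup norm. Define G_m(x) = d^{−m} log‖F^m(x)‖. Then the limit G(x) = lim_{m→∞} G_m(x) exists for every x ≠ 0 and satisfies |G_m(x) − G(x)| ≤ B/((d−1)·d^{m−1}) for all m ≥ 0; in particular |G_m(x) − G(x)| ≤ (B/d^m)·(d/(d−1)). -/

import Mathlib

open Filter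

/-- Tate's telescoping argument: if `F` is homogeneous of degree `d ≥ 2`, vanishes only at the
origin, and `|log‖F y‖ − d·log‖y‖| ≤ B` for `y ≠ 0`, then `G_m(x) = d^{−m} log‖F^m x‖`
converges to a limit `G(x)` with `|G_m(x) − G(x)| ≤ B/((d−1)·d^{m−1}) ≤ (B/d^m)·(d/(d−1))`. -/
theorem stmt_7 (N : ℕ) (d : ℕ) (hd : 2 ≤ d)
    (F : (Fin (N + 1) → ℂ) → (Fin (N + 1) → ℂ)) (B : ℝ)
    (hzero : ∀ y, F y = 0 → y = 0)
    (hhom : ∀ (c : ℂ) (y), F (c • y) = c ^ d • F y)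
    (hB : ∀ y, y ≠ 0 → |Real.log ‖F y‖ - (d : ℝ) * Real.log ‖y‖| ≤ B) :
    ∀ x, x ≠ 0 → ∃ G : ℝ,
      Tendsto (fun m : ℕ => Real.log ‖F^[m] x‖ / (d : ℝ) ^ m) atTop (nhds G) ∧
      ∀ m : ℕ,
        |Real.log ‖F^[m] x‖ / (d : ℝ) ^ m - G| ≤ B / (((d : ℝ) - 1) * (d : ℝ) ^ (m - 1)) ∧
        |Real.log ‖F^[m] x‖ / (d : ℝ) ^ m - G| ≤ (B / (d : ℝ) ^ m) * ((d : ℝ) / ((d : ℝ) - 1)) := by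
  intro x hx
  have hd1 : (1 : ℝ) < (d : ℝ) := by exact_mod_cast hd.trans_lt' one_lt_two
  have hdpos : (0 : ℝ) < (d : ℝ) := by linarith
  have hd1' : (0 : ℝ) < (d : ℝ) - 1 := by linarith
  have hne : ∀ m : ℕ, F^[m] x ≠ 0 := by
    intro m
    induction m with
    | zero => simpa using hx
    | succ n ih =>
      rw [Function.iterate_succ_apply']
      intro h
      exact ih (hzero _ h)
  set f : ℕ → ℝ := fun m => Real.log ‖F^[m] x‖ / (d : ℝ) ^ m with hf
  have hB0 : 0 ≤ B := le_trans (abs_nonneg _) (hB x hx)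
  have hr : (1 : ℝ) / d < 1 := by
    rw [div_lt_one hdpos]; exact hd1
  have key : ∀ n : ℕ, dist (f n) (f (n + 1)) ≤ (B / d) * ((1 : ℝ) / d) ^ n := by
    intro n
    have h1 := hB _ (hne n)
    rw [Real.dist_eq, hf]
    have hpow : (0 : ℝ) < (d : ℝ) ^ n := pow_pos hdpos n
    have : Real.log ‖F^[n] x‖ / (d : ℝ) ^ n - Real.log ‖F^[n + 1] x‖ / (d : ℝ) ^ (n + 1)
        = -(Real.log ‖F (F^[n] x)‖ - (d : ℝ) * Real.log ‖F^[n] x‖) / (d : ℝ) ^ (n + 1) := by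
      rw [Function.iterate_succ_apply']
      field_simp
      ring
    rw [this, abs_div, abs_neg, abs_of_pos (pow_pos hdpos (n + 1))]
    rw [div_le_iff₀ (pow_pos hdpos (n + 1))]
    have heq2 : B / d * (1 / d) ^ n * (d : ℝ) ^ (n + 1) = B := by
      rw [one_div, inv_pow, pow_succ]
      field_simp
    rw [heq2]
    exact h1
  have hcauchy : CauchySeq f := cauchySeq_of_le_geometric _ _ hr key
  obtain ⟨G, hG⟩ := cauchySeq_tendsto_of_complete hcauchy
  refine ⟨G, hG, ?_⟩
  intro m
  have hbound := dist_le_of_le_geometric_of_tendsto _ _ hr key hG m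
  rw [Real.dist_eq] at hbound
  have heq : B / d * (1 / d) ^ m / (1 - 1 / d) = B / (((d : ℝ) - 1) * (d : ℝ) ^ m) := by
    rw [one_sub_div (ne_of_gt hdpos)]
    field_simp
    ring_nf
    rw [mul_assoc, ← mul_pow, mul_inv_cancel₀ (ne_of_gt hdpos), one_pow, mul_one]
  rw [heq] at hbound
  constructor
  · refine hbound.trans ?_
    exact div_le_div_of_nonneg_left hB0 (by positivity)
      (by gcongr <;> [exact hd1.le; exact Nat.sub_le m 1])
  · refine hbound.trans ?_
    rw [show (B / (d : ℝ) ^ m) * ((d : ℝ) / ((d : ℝ) - 1))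
        = B * (d : ℝ) / (((d : ℝ) - 1) * (d : ℝ) ^ m) from by
      field_simp]
    gcongr
    nlinarith
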